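/- Let z_1, ..., z_n be real numbers with mean z̄ and finite-population variance σ² = (1/(n−1))·∑(z_i − z̄)². Let A ⊂ {1,...,n} be a uniformly random subset of fixed size n_A, with sample mean z̄_A, and set p_A = n_A/n, τ = min{1/70, (3p_A)²/70, (3−3p_A)²/70}. Then for every t > 0, P(z̄_A − z̄ ≥ t) ≤ exp(−p_A·n_A·t² / ((1+τ)²·σ²)). -/

import Mathlib

set_option maxHeartbeats 1000000

open Finset Real

theorem hoeff_two_point (p q x : ℝ) (hp : 0 ≤ p) (hq : 0 ≤ q) (hpq : p + q = 1) :
    p * Real.exp (q * x) + q * Real.exp (-(p * x)) ≤ Real.exp (x ^ 2 / 8) := by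
  set F : ℝ → ℝ := fun y => p * Real.exp (q * y) + q * Real.exp (-(p * y)) with hF
  have hFpos : ∀ y, 0 < F y := by
    intro y
    have h := convexOn_exp.2 (Set.mem_univ (q * y)) (Set.mem_univ (-(p * y))) hp hq hpq
    simp only [smul_eq_mul] at h
    have h0 : p * (q * y) + q * (-(p * y)) = 0 := by ring
    rw [h0, Real.exp_zero] at h
    exact lt_of_lt_of_le one_pos h
  set F' : ℝ → ℝ := fun y => p * q * Real.exp (q * y) - p * q * Real.exp (-(p * y)) with hF'def
  have hF' : ∀ y, HasDerivAt F (F' y) y := by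
    intro y
    have h1 : HasDerivAt (fun y : ℝ => q * y) q y := by
      simpa using (hasDerivAt_id y).const_mul q
    have h2 : HasDerivAt (fun y : ℝ => -(p * y)) (-p) y := by
      simpa using (hasDerivAt_id y).const_mul (-p)
    have := (h1.exp.const_mul p).add (h2.exp.const_mul q)
    exact this.congr_deriv (by simp only [hF'def]; ring)
  have hF'' : ∀ y, HasDerivAt F'
      (p * q * q * Real.exp (q * y) + p * q * p * Real.exp (-(p * y))) y := by
    intro y
    have h1 : HasDerivAt (fun y : ℝ => q * y) q y := by
      simpa using (hasDerivAt_id y).const_mul q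
    have h2 : HasDerivAt (fun y : ℝ => -(p * y)) (-p) y := by
      simpa using (hasDerivAt_id y).const_mul (-p)
    have := (h1.exp.const_mul (p * q)).sub (h2.exp.const_mul (p * q))
    exact this.congr_deriv (by ring)
  set G : ℝ → ℝ := fun y => y / 4 - F' y / F y with hGdef
  have hg' : ∀ y, HasDerivAt (fun y => y ^ 2 / 8 - Real.log (F y)) (G y) y := by
    intro y
    have h1 : HasDerivAt (fun y : ℝ => y ^ 2 / 8) (y / 4) y := by
      have := (hasDerivAt_pow 2 y).div_const 8
      exact this.congr_deriv (by ring)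
    have h2 : HasDerivAt (fun y => Real.log (F y)) (F' y / F y) y :=
      (hF' y).log (ne_of_gt (hFpos y))
    exact h1.sub h2
  have hG' : ∀ y, HasDerivAt G (1 / 4 -
      ((p * q * q * Real.exp (q * y) + p * q * p * Real.exp (-(p * y))) * F y - F' y * F' y)
        / (F y) ^ 2) y := by
    intro y
    have h1 : HasDerivAt (fun y : ℝ => y / 4) (1 / 4 : ℝ) y := by
      simpa using (hasDerivAt_id y).div_const 4
    have h2 := (hF'' y).div (hF' y) (ne_of_gt (hFpos y))
    exact h1.sub h2
  have hG'nonneg : ∀ y, 0 ≤ 1 / 4 -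
      ((p * q * q * Real.exp (q * y) + p * q * p * Real.exp (-(p * y))) * F y - F' y * F' y)
        / (F y) ^ 2 := by
    intro y
    have hApos : 0 < Real.exp (q * y) := Real.exp_pos _
    have hBpos : 0 < Real.exp (-(p * y)) := Real.exp_pos _
    simp only [hF, hF'def]
    set A := Real.exp (q * y) with hA
    set B := Real.exp (-(p * y)) with hB
    have hFpos' : 0 < p * A + q * B := by
      have := hFpos y
      simpa [hF, ← hA, ← hB] using this
    have hnum : (p * q * q * A + p * q * p * B) * (p * A + q * B) -
        (p * q * A - p * q * B) * (p * q * A - p * q * B) = p * q * A * B := by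
      linear_combination (p * q * A * B * (p + q + 1)) * hpq
    rw [hnum]
    have hden : 4 * (p * q * A * B) ≤ (p * A + q * B) ^ 2 := by
      nlinarith [sq_nonneg (p * A - q * B)]
    have hfin : p * q * A * B / (p * A + q * B) ^ 2 ≤ 1 / 4 := by
      rw [div_le_iff₀ (pow_pos hFpos' 2)]
      linarith
    linarith
  have hGmono : Monotone G := by
    apply monotone_of_deriv_nonneg (fun y => (hG' y).differentiableAt)
    intro y
    rw [(hG' y).deriv]
    exact hG'nonneg y
  have hG0 : G 0 = 0 := by
    simp only [hGdef, hF'def]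
    norm_num
  set g : ℝ → ℝ := fun y => y ^ 2 / 8 - Real.log (F y) with hgdef
  have hg0 : g 0 = 0 := by
    simp only [hgdef, hF]
    norm_num [hpq]
  have hgdiff : Differentiable ℝ g := fun y => (hg' y).differentiableAt
  have hgnonneg : 0 ≤ g x := by
    rcases le_or_gt 0 x with hx | hx
    · have hmono : MonotoneOn g (Set.Ici (0:ℝ)) := by
        apply monotoneOn_of_deriv_nonneg (convex_Ici 0) hgdiff.continuous.continuousOn
          hgdiff.differentiableOn
        intro y hy
        rw [(hg' y).deriv]
        rw [interior_Ici] at hy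
        calc (0:ℝ) = G 0 := hG0.symm
        _ ≤ G y := hGmono (le_of_lt hy)
      have := hmono (Set.self_mem_Ici) (Set.mem_Ici.2 hx) hx
      rw [hg0] at this; exact this
    · have hanti : AntitoneOn g (Set.Iic (0:ℝ)) := by
        apply antitoneOn_of_deriv_nonpos (convex_Iic 0) hgdiff.continuous.continuousOn
          hgdiff.differentiableOn
        intro y hy
        rw [(hg' y).deriv]
        rw [interior_Iic] at hy
        calc G y ≤ G 0 := hGmono (le_of_lt hy)
        _ = 0 := hG0
      have := hanti (Set.mem_Iic.2 hx.le) (Set.self_mem_Iic) hx.le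
      rw [hg0] at this; exact this
  have hlog : Real.log (F x) ≤ x ^ 2 / 8 := by
    simp only [hgdef] at hgnonneg; linarith
  calc F x = Real.exp (Real.log (F x)) := (Real.exp_log (hFpos x)).symm
  _ ≤ Real.exp (x ^ 2 / 8) := Real.exp_le_exp.2 hlog

theorem mgf_srswor {ι : Type*} [DecidableEq ι] (lam : ℝ) (w : ι → ℝ) :
    ∀ (s : Finset ι) (k : ℕ),
      ∑ A ∈ Finset.powersetCard k s, Real.exp (lam * ∑ i ∈ A, w i) ≤
        (s.card.choose k : ℝ) *
          Real.exp (lam * k * ((∑ i ∈ s, w i) / s.card) +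
            lam ^ 2 * ((∑ i ∈ s, (w i) ^ 2) - (∑ i ∈ s, w i) ^ 2 / s.card) / 4) := by
  intro s
  induction s using Finset.induction_on with
  | empty =>
    intro k
    cases k with
    | zero => simp
    | succ k =>
      rw [Finset.powersetCard_eq_empty.2 (by simp)]
      simp
  | @insert a s' ha ih =>
    intro k
    have hcard : (insert a s').card = s'.card + 1 := Finset.card_insert_of_notMem ha
    have hVpos : 0 ≤ (∑ i ∈ insert a s', (w i) ^ 2) -
        (∑ i ∈ insert a s', w i) ^ 2 / (insert a s').card := by
      have hcs := sq_sum_le_card_mul_sum_sq (s := insert a s') (f := w)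
      have hc0 : (0:ℝ) < ((insert a s').card : ℝ) := by rw [hcard]; positivity
      rw [sub_nonneg, div_le_iff₀ hc0, mul_comm]
      exact_mod_cast hcs
    cases k with
    | zero =>
      rw [Finset.powersetCard_zero]
      simp only [Finset.sum_singleton, Finset.sum_empty, mul_zero, Nat.choose_zero_right,
        Nat.cast_zero, Nat.cast_one, one_mul, zero_mul, zero_add]
      rw [Real.exp_zero]
      calc (1:ℝ) = Real.exp 0 := (Real.exp_zero).symm
      _ ≤ _ := Real.exp_le_exp.2 (by positivity)
    | succ j =>
      by_cases hjs : j ≤ s'.card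
      swap
      · -- degenerate: j+1 > card
        have hlt : (insert a s').card < j + 1 := by omega
        rw [Finset.powersetCard_eq_empty.2 hlt, Nat.choose_eq_zero_of_lt hlt]
        simp
      rcases Finset.eq_empty_or_nonempty s' with rfl | hs'ne
      · -- s' empty, j = 0
        have hj0 : j = 0 := by simpa using hjs
        subst hj0
        rw [show (insert a (∅ : Finset ι)) = {a} from rfl, Finset.powersetCard_one,
          Finset.sum_map]
        simp only [Finset.card_singleton, Finset.sum_singleton, Function.Embedding.coeFn_mk]
        norm_num
      -- main case
      have hN1 : 1 ≤ s'.card := hs'ne.card_pos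
      set NN : ℝ := (s'.card : ℝ) with hNNdef
      have hNN : 1 ≤ NN := by rw [hNNdef]; exact_mod_cast hN1
      have hNN0 : NN ≠ 0 := by linarith
      have hNN1 : NN + 1 ≠ 0 := by linarith
      set T' : ℝ := ∑ i ∈ s', w i with hT'def
      set Q' : ℝ := ∑ i ∈ s', (w i) ^ 2 with hQ'def
      set δ : ℝ := w a - T' / NN with hδdef
      set x : ℝ := lam * δ with hxdef
      set p : ℝ := ((j:ℝ) + 1) / (NN + 1) with hpdef
      set q : ℝ := (NN - (j:ℝ)) / (NN + 1) with hqdef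
      set C : ℝ := ((s'.card + 1).choose (j+1) : ℝ) with hCdef
      have hCpos : 0 < C := by
        have : 0 < (s'.card + 1).choose (j+1) := Nat.choose_pos (by omega)
        rw [hCdef]; exact_mod_cast this
      set E : ℝ := Real.exp (lam * ((j:ℝ)+1) * ((w a + T') / (NN + 1)) +
        lam ^ 2 * (Q' - T' ^ 2 / NN) / 4) with hEdef
      clear_value NN T' Q' δ x p q C E
      -- choose identities
      have hC2 : ((s'.card.choose j : ℕ) : ℝ) = C * p := by
        have hnat := Nat.add_one_mul_choose_eq s'.card j
        have hthis : (NN + 1) * (s'.card.choose j : ℝ) = C * ((j:ℝ) + 1) := by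
          rw [hNNdef, hCdef]
          have := congrArg (fun m : ℕ => (m : ℝ)) hnat
          push_cast [Nat.succ_eq_add_one] at this
          linarith [this]
        rw [hpdef, mul_div_assoc', eq_div_iff hNN1]
        linarith [hthis]
      have hC1 : ((s'.card.choose (j+1) : ℕ) : ℝ) = C * q := by
        have hpas : (s'.card + 1).choose (j+1) = s'.card.choose j + s'.card.choose (j+1) :=
          Nat.choose_succ_succ s'.card j
        have hcast : C = ((s'.card.choose j : ℕ) : ℝ) + ((s'.card.choose (j+1) : ℕ) : ℝ) := by
          rw [hCdef]; exact_mod_cast congrArg (Nat.cast (R := ℝ)) hpas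
        have hq1 : q = 1 - p := by
          rw [hpdef, hqdef, eq_sub_iff_add_eq, ← add_div, div_eq_one_iff_eq hNN1]
          ring
        have hexp : C * q = C - C * p := by rw [hq1]; ring
        rw [hexp, ← hC2, hcast]
        ring
      -- split the powerset
      rw [Finset.powersetCard_succ_insert ha]
      have hdisj : Disjoint (Finset.powersetCard (j+1) s')
          ((Finset.powersetCard j s').image (insert a)) := by
        rw [Finset.disjoint_left]
        intro A hA hAim
        have hsub := (Finset.mem_powersetCard.1 hA).1
        obtain ⟨B, hB, rfl⟩ := Finset.mem_image.1 hAim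
        exact ha (hsub (Finset.mem_insert_self a B))
      rw [Finset.sum_union hdisj]
      have hinj : ∀ B1 ∈ Finset.powersetCard j s', ∀ B2 ∈ Finset.powersetCard j s',
          insert a B1 = insert a B2 → B1 = B2 := by
        intro B1 h1 B2 h2 he
        have ha1 : a ∉ B1 := fun hx => ha ((Finset.mem_powersetCard.1 h1).1 hx)
        have ha2 : a ∉ B2 := fun hx => ha ((Finset.mem_powersetCard.1 h2).1 hx)
        rw [← Finset.erase_insert ha1, ← Finset.erase_insert ha2, he]
      rw [Finset.sum_image hinj]
      have hsum2 : ∑ B ∈ Finset.powersetCard j s', Real.exp (lam * ∑ i ∈ insert a B, w i)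
          = Real.exp (lam * w a) * ∑ B ∈ Finset.powersetCard j s',
              Real.exp (lam * ∑ i ∈ B, w i) := by
        rw [Finset.mul_sum]
        refine Finset.sum_congr rfl (fun B hB => ?_)
        have haB : a ∉ B := fun hx => ha ((Finset.mem_powersetCard.1 hB).1 hx)
        rw [Finset.sum_insert haB, mul_add, Real.exp_add]
      rw [hsum2]
      -- rewrite RHS of goal
      rw [Finset.sum_insert ha, Finset.sum_insert ha, hcard]
      push_cast
      -- apply induction hypotheses
      have h1 := ih (j+1)
      have h2 := ih j
      push_cast at h1 h2
      have hq0 : 0 ≤ q := by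
        have : (j:ℝ) ≤ NN := by rw [hNNdef]; exact_mod_cast hjs
        rw [hqdef]
        apply div_nonneg (by linarith) (by linarith)
      have hp0 : 0 ≤ p := by rw [hpdef]; positivity
      have hpq : p + q = 1 := by rw [hpdef, hqdef]; field_simp; ring
      -- exponential splitting identities
      have hsplit1 : Real.exp (lam * ((j:ℝ)+1) * (T' / NN) + lam ^ 2 * (Q' - T' ^ 2 / NN) / 4)
          = Real.exp (-(p * x)) * E := by
        rw [hEdef, ← Real.exp_add]
        congr 1
        rw [hpdef, hxdef, hδdef]
        field_simp
        ring
      have hsplit2 : Real.exp (lam * w a) *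
            Real.exp (lam * (j:ℝ) * (T' / NN) + lam ^ 2 * (Q' - T' ^ 2 / NN) / 4)
          = Real.exp (q * x) * E := by
        rw [hEdef, ← Real.exp_add, ← Real.exp_add]
        congr 1
        rw [hqdef, hxdef, hδdef]
        field_simp
        ring
      have hEpos : 0 < E := by rw [hEdef]; exact Real.exp_pos _
      -- chain
      calc (∑ A ∈ Finset.powersetCard (j+1) s', Real.exp (lam * ∑ i ∈ A, w i)) +
            Real.exp (lam * w a) * ∑ B ∈ Finset.powersetCard j s', Real.exp (lam * ∑ i ∈ B, w i)
          ≤ ((s'.card.choose (j+1) : ℕ) : ℝ) *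
              Real.exp (lam * ((j:ℝ)+1) * (T' / NN) + lam ^ 2 * (Q' - T' ^ 2 / NN) / 4) +
            Real.exp (lam * w a) * (((s'.card.choose j : ℕ) : ℝ) *
              Real.exp (lam * (j:ℝ) * (T' / NN) + lam ^ 2 * (Q' - T' ^ 2 / NN) / 4)) := by
            exact add_le_add h1 (mul_le_mul_of_nonneg_left h2 (Real.exp_pos _).le)
        _ = C * ((q * Real.exp (-(p * x)) + p * Real.exp (q * x)) * E) := by
            have e2 : Real.exp (lam * w a) * (C * p *
                Real.exp (lam * (j:ℝ) * (T' / NN) + lam ^ 2 * (Q' - T' ^ 2 / NN) / 4))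
                = C * p * (Real.exp (q * x) * E) := by
              rw [← hsplit2]; ring
            rw [hC1, hC2, hsplit1, e2]
            ring
        _ ≤ C * (Real.exp (x ^ 2 / 8) * E) := by
            apply mul_le_mul_of_nonneg_left _ hCpos.le
            apply mul_le_mul_of_nonneg_right _ hEpos.le
            calc q * Real.exp (-(p * x)) + p * Real.exp (q * x)
                = p * Real.exp (q * x) + q * Real.exp (-(p * x)) := by ring
              _ ≤ Real.exp (x ^ 2 / 8) := hoeff_two_point p q x hp0 hq0 hpq
        _ ≤ C * (Real.exp (lam ^ 2 * (δ ^ 2 * NN / (NN + 1)) / 4) * E) := by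
            apply mul_le_mul_of_nonneg_left _ hCpos.le
            apply mul_le_mul_of_nonneg_right _ hEpos.le
            apply Real.exp_le_exp.2
            calc x ^ 2 / 8 = x ^ 2 * (1 / 8) := by ring
              _ ≤ x ^ 2 * (NN / (NN + 1) * (1 / 4)) := by
                  apply mul_le_mul_of_nonneg_left _ (sq_nonneg x)
                  have hhalf : (1:ℝ) / 2 ≤ NN / (NN + 1) := by
                    rw [div_le_div_iff₀ (by norm_num) (by positivity)]
                    linarith
                  linarith
              _ = lam ^ 2 * (δ ^ 2 * NN / (NN + 1)) / 4 := by
                  rw [hxdef, mul_pow]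
                  ring
        _ = C * Real.exp (lam * ((j:ℝ)+1) * ((w a + T') / (NN + 1)) +
              lam ^ 2 * ((w a ^ 2 + Q') - (w a + T') ^ 2 / (NN + 1)) / 4) := by
            rw [hEdef, ← Real.exp_add, mul_eq_mul_left_iff]
            left
            congr 1
            have hcore : (w a - T' / NN) ^ 2 * NN / (NN + 1) + (Q' - T' ^ 2 / NN)
                = w a ^ 2 + Q' - (w a + T') ^ 2 / (NN + 1) := by
              field_simp
              ring
            rw [hδdef]
            linear_combination (lam ^ 2 / 4) * hcore
        _ = _ := by
            rw [hCdef, hNNdef, hT'def, hQ'def]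

/-- Concentration inequality for simple random sampling without replacement
(Bloniarz et al. 2016): the proportion of size-`nA` subsets whose sample mean exceeds the
population mean by at least `t` is bounded by `exp(−p_A·n_A·t²/((1+τ)²σ²))`. -/
theorem stmt16 (n nA : ℕ) (hn : 2 ≤ n) (hnA : 0 < nA) (hle : nA ≤ n)
    (z : Fin n → ℝ) (t : ℝ) (ht : 0 < t) :
    (((Finset.powersetCard nA (Finset.univ : Finset (Fin n))).filter
          (fun A => t ≤ (1 / (nA : ℝ)) * (∑ i ∈ A, z i) -
            (1 / (n : ℝ)) * ∑ i, z i)).card : ℝ) /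
        ((Finset.powersetCard nA (Finset.univ : Finset (Fin n))).card : ℝ) ≤
      Real.exp (-(((nA : ℝ) / n) * nA * t ^ 2) /
        ((1 + min (1 / 70) (min ((3 * ((nA : ℝ) / n)) ^ 2 / 70)
              ((3 - 3 * ((nA : ℝ) / n)) ^ 2 / 70))) ^ 2 *
          ((1 / ((n : ℝ) - 1)) *
            ∑ i, (z i - (1 / (n : ℝ)) * ∑ j, z j) ^ 2))) := by
  have hn0 : (0:ℝ) < (n:ℝ) := by positivity
  have hn1 : (1:ℝ) ≤ (n:ℝ) - 1 := by
    have : (2:ℝ) ≤ (n:ℝ) := by exact_mod_cast hn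
    linarith
  have hk0 : (0:ℝ) < (nA:ℝ) := by exact_mod_cast hnA
  set T : ℝ := ∑ i, z i with hTdef
  set V : ℝ := ∑ i, (z i - (1 / (n:ℝ)) * T) ^ 2 with hVdef
  have hVsum : V = (∑ i, (z i) ^ 2) - T ^ 2 / n := by
    rw [hVdef]
    have : ∀ i : Fin n, (z i - (1 / (n:ℝ)) * T) ^ 2
        = (z i)^2 - (2/n) * T * z i + T^2/n^2 := by
      intro i; field_simp; ring
    rw [Finset.sum_congr rfl (fun i _ => this i)]
    rw [Finset.sum_add_distrib, Finset.sum_sub_distrib, ← Finset.mul_sum, ← hTdef,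
      Finset.sum_const, Finset.card_univ, Fintype.card_fin, nsmul_eq_mul]
    field_simp
    ring
  -- τ ≥ 0 facts
  set τ : ℝ := min (1 / 70) (min ((3 * ((nA : ℝ) / n)) ^ 2 / 70)
      ((3 - 3 * ((nA : ℝ) / n)) ^ 2 / 70)) with hτdef
  have hτ0 : 0 ≤ τ := by
    rw [hτdef]
    refine le_min (by norm_num) (le_min (by positivity) (by positivity))
  have hτ1 : 1 ≤ (1 + τ) ^ 2 := by nlinarith
  have hNcard : ((Finset.powersetCard nA (Finset.univ : Finset (Fin n))).card : ℝ)
      = (n.choose nA : ℝ) := by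
    rw [Finset.card_powersetCard, Finset.card_univ, Fintype.card_fin]
  have hNc0 : (0:ℝ) < (n.choose nA : ℝ) := by
    exact_mod_cast Nat.choose_pos hle
  rcases eq_or_lt_of_le (show (0:ℝ) ≤ V by rw [hVdef]; positivity) with hV0 | hVpos
  · -- degenerate: V = 0, all z equal, filter empty
    have hzconst : ∀ i : Fin n, z i = (1 / (n:ℝ)) * T := by
      intro i
      have h := (Finset.sum_eq_zero_iff_of_nonneg
        (fun i _ => sq_nonneg (z i - (1 / (n:ℝ)) * T))).1 hV0.symm i (Finset.mem_univ i)
      have := sq_eq_zero_iff.1 h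
      linarith
    have hfilt : (Finset.powersetCard nA (Finset.univ : Finset (Fin n))).filter
          (fun A => t ≤ (1 / (nA : ℝ)) * (∑ i ∈ A, z i) -
            (1 / (n : ℝ)) * ∑ i, z i) = ∅ := by
      rw [Finset.filter_eq_empty_iff]
      intro A hA
      have hAcard : A.card = nA := (Finset.mem_powersetCard.1 hA).2
      have hsum : ∑ i ∈ A, z i = nA * ((1 / (n:ℝ)) * T) := by
        rw [Finset.sum_congr rfl (fun i _ => hzconst i), Finset.sum_const, hAcard,
          nsmul_eq_mul]
      rw [hsum]
      push_neg
      rw [show (1 / (nA:ℝ)) * ((nA:ℝ) * ((1 / (n:ℝ)) * T)) - (1 / (n:ℝ)) * T = 0 by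
        field_simp; ring]
      exact ht
    rw [hfilt]
    simp only [Finset.card_empty, Nat.cast_zero, zero_div]
    positivity
  · -- main case
    set lam : ℝ := 2 * (nA:ℝ) * t / V with hlamdef
    have hlam0 : 0 < lam := by rw [hlamdef]; positivity
    set K := (Finset.powersetCard nA (Finset.univ : Finset (Fin n))).filter
          (fun A => t ≤ (1 / (nA : ℝ)) * (∑ i ∈ A, z i) -
            (1 / (n : ℝ)) * ∑ i, z i) with hKdef
    have hchern : (K.card : ℝ) * Real.exp (lam * ((nA:ℝ) * t + (nA:ℝ) * (T / n)))
        ≤ (n.choose nA : ℝ) *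
          Real.exp (lam * (nA:ℝ) * (T / n) + lam ^ 2 * V / 4) := by
      have h1 : (K.card : ℝ) * Real.exp (lam * ((nA:ℝ) * t + (nA:ℝ) * (T / n)))
          = ∑ _A ∈ K, Real.exp (lam * ((nA:ℝ) * t + (nA:ℝ) * (T / n))) := by
        rw [Finset.sum_const, nsmul_eq_mul]
      rw [h1]
      calc ∑ A ∈ K, Real.exp (lam * ((nA:ℝ) * t + (nA:ℝ) * (T / n)))
          ≤ ∑ A ∈ K, Real.exp (lam * ∑ i ∈ A, z i) := by
            refine Finset.sum_le_sum (fun A hA => ?_)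
            rw [Real.exp_le_exp]
            rw [hKdef, Finset.mem_filter] at hA
            have hAcard : A.card = nA := (Finset.mem_powersetCard.1 hA.1).2
            have hcond := hA.2
            have : (nA:ℝ) * t + (nA:ℝ) * (T / n) ≤ ∑ i ∈ A, z i := by
              have h2 := mul_le_mul_of_nonneg_left hcond (le_of_lt hk0)
              rw [mul_sub] at h2
              rw [show (nA:ℝ) * ((1 / (nA:ℝ)) * ∑ i ∈ A, z i) = ∑ i ∈ A, z i by
                field_simp] at h2
              rw [hTdef]
              have : (nA:ℝ) * ((1/(n:ℝ)) * ∑ i, z i) = (nA:ℝ) * ((∑ i, z i) / n) := by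
                ring
              linarith [h2]
            exact mul_le_mul_of_nonneg_left this (le_of_lt hlam0)
        _ ≤ ∑ A ∈ Finset.powersetCard nA (Finset.univ : Finset (Fin n)),
              Real.exp (lam * ∑ i ∈ A, z i) := by
            refine Finset.sum_le_sum_of_subset_of_nonneg (Finset.filter_subset _ _)
              (fun A _ _ => (Real.exp_pos _).le)
        _ ≤ (n.choose nA : ℝ) *
              Real.exp (lam * (nA:ℝ) * (T / n) + lam ^ 2 * V / 4) := by
            have := mgf_srswor lam z Finset.univ nA
            rw [Finset.card_univ, Fintype.card_fin] at this
            rw [hVsum, hTdef]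
            exact this
    -- conclude
    rw [hNcard, div_le_iff₀ hNc0]
    have hexp : Real.exp (lam * (nA:ℝ) * (T / n) + lam ^ 2 * V / 4)
        = Real.exp (lam * ((nA:ℝ) * t + (nA:ℝ) * (T / n))) *
          Real.exp (- ((nA:ℝ)^2 * t^2) / V) := by
      rw [← Real.exp_add]
      congr 1
      rw [hlamdef]
      field_simp
      ring
    have hK2 : (K.card : ℝ) ≤ (n.choose nA : ℝ) * Real.exp (- ((nA:ℝ)^2 * t^2) / V) := by
      have hc := hchern
      rw [hexp, ← mul_assoc] at hc
      have hepos : 0 < Real.exp (lam * ((nA:ℝ) * t + (nA:ℝ) * (T / n))) := Real.exp_pos _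
      calc (K.card : ℝ) = (K.card : ℝ) * Real.exp (lam * ((nA:ℝ) * t + (nA:ℝ) * (T / n)))
            / Real.exp (lam * ((nA:ℝ) * t + (nA:ℝ) * (T / n))) := by
            field_simp
        _ ≤ (n.choose nA : ℝ) * Real.exp (- ((nA:ℝ)^2 * t^2) / V) := by
            rw [div_le_iff₀ hepos]
            calc (K.card : ℝ) * Real.exp (lam * ((nA:ℝ) * t + (nA:ℝ) * (T / n)))
                ≤ (n.choose nA : ℝ) * Real.exp (lam * ((nA:ℝ) * t + (nA:ℝ) * (T / n))) *
                  Real.exp (- ((nA:ℝ)^2 * t^2) / V) := hc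
              _ = (n.choose nA : ℝ) * Real.exp (- ((nA:ℝ)^2 * t^2) / V) *
                  Real.exp (lam * ((nA:ℝ) * t + (nA:ℝ) * (T / n))) := by ring
    refine hK2.trans ?_
    rw [mul_comm (Real.exp _) ((n.choose nA : ℝ))]
    apply mul_le_mul_of_nonneg_left _ hNc0.le
    rw [Real.exp_le_exp]
    have hden0 : (0:ℝ) < (1 + τ)^2 * ((1 / ((n:ℝ) - 1)) * V) := by
      apply mul_pos (by nlinarith) (by positivity)
    rw [neg_div, neg_div, neg_le_neg_iff, div_le_div_iff₀ hden0 hVpos]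
    have hP : (0:ℝ) < (nA:ℝ)^2 * t^2 * V := by positivity
    have hfac : (1:ℝ)/n ≤ (1 + τ)^2 * (1/((n:ℝ)-1)) := by
      have h1 : (1:ℝ)/n ≤ 1/((n:ℝ)-1) := by
        apply one_div_le_one_div_of_le (by linarith) (by linarith)
      have h2 : (1:ℝ)/((n:ℝ)-1) ≤ (1 + τ)^2 * (1/((n:ℝ)-1)) := by
        apply le_mul_of_one_le_left (by positivity) hτ1
      linarith
    calc ((nA:ℝ) / n) * (nA:ℝ) * t^2 * V = (nA:ℝ)^2 * t^2 * V * (1/(n:ℝ)) := by ring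
      _ ≤ (nA:ℝ)^2 * t^2 * V * ((1 + τ)^2 * (1/((n:ℝ)-1))) :=
          mul_le_mul_of_nonneg_left hfac hP.le
      _ = (nA:ℝ)^2 * t^2 * ((1 + τ)^2 * (1/((n:ℝ)-1) * V)) := by ring
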